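/- Let A be a graded-commutative ring (e.g. the real cohomology ring of a compact manifold), V a finite-dimensional real subspace of a homogeneous component A_s such that c^k ≠ 0 for all nonzero c ∈ V. If b ∈ A_{s(r-1)} is such that the linear map V → A_{sr}, c ↦ cb, has maximal rank among all such multiplication maps by elements of A_{s(r-1)}, and r < k, then the map c ↦ cb is injective on V. -/

import Mathlib

open LinearMap Module Submodule

/-- Eigen-style independence: if `L` is injective and `L vᵢ = μᵢ • M vᵢ` with distinct
nonzero `μᵢ`, the `vᵢ` are linearly independent. -/
lemma indep_aux {V W : Type*} [AddCommGroup V] [Module ℝ V] [AddCommGroup W] [Module ℝ W]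
    (L M : V →ₗ[ℝ] W) (hL : ∀ x, L x = 0 → x = 0) :
    ∀ (n : ℕ) (v : Fin n → V) (μ : Fin n → ℝ), (∀ i, v i ≠ 0) → Function.Injective μ →
      (∀ i, μ i ≠ 0) → (∀ i, L (v i) = μ i • M (v i)) → LinearIndependent ℝ v := by
  intro n
  induction n with
  | zero => intro v μ _ _ _ _; exact linearIndependent_empty_type
  | succ n IH =>
    intro v μ hv0 hinj hμ0 heq
    rw [Fintype.linearIndependent_iff]
    intro g hg
    -- second relation obtained by applying M and pulling back through L
    have hMv : ∀ i, M (v i) = (μ i)⁻¹ • L (v i) := by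
      intro i
      rw [heq i, smul_smul, inv_mul_cancel₀ (hμ0 i), one_smul]
    have hrel2 : ∑ i, (g i * (μ i)⁻¹) • v i = 0 := by
      apply hL
      have hsum : L (∑ i, (g i * (μ i)⁻¹) • v i) = M (∑ i, g i • v i) := by
        rw [map_sum, map_sum]
        refine Finset.sum_congr rfl fun i _ => ?_
        rw [map_smul, map_smul, hMv i, smul_smul]
      rw [hsum, hg, map_zero]
    -- subtract (μ last)⁻¹ times the original relation
    set m : Fin (n + 1) := Fin.last n with hm
    have hrel3 : ∑ i, (g i * ((μ i)⁻¹ - (μ m)⁻¹)) • v i = 0 := by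
      have h1 : ∑ i, (g i * ((μ i)⁻¹ - (μ m)⁻¹)) • v i
          = (∑ i, (g i * (μ i)⁻¹) • v i) - (μ m)⁻¹ • ∑ i, g i • v i := by
        rw [Finset.smul_sum, ← Finset.sum_sub_distrib]
        refine Finset.sum_congr rfl fun i _ => ?_
        rw [smul_smul, ← sub_smul]
        congr 1
        ring
      rw [h1, hrel2, hg, smul_zero, sub_zero]
    -- the last coefficient in hrel3 vanishes, leaving a relation on the first n vectors
    have hrel4 : ∑ i : Fin n, (g i.castSucc * ((μ i.castSucc)⁻¹ - (μ m)⁻¹)) • v i.castSucc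
        = 0 := by
      rw [Fin.sum_univ_castSucc] at hrel3
      simpa [hm] using hrel3
    have hIH := IH (fun i : Fin n => v i.castSucc) (fun i : Fin n => μ i.castSucc)
      (fun i => hv0 _) (hinj.comp (Fin.castSucc_injective n)) (fun i => hμ0 _)
      (fun i => heq _)
    have hcoef := Fintype.linearIndependent_iff.mp hIH
      (fun i : Fin n => g i.castSucc * ((μ i.castSucc)⁻¹ - (μ m)⁻¹)) hrel4
    have hgc : ∀ i : Fin n, g i.castSucc = 0 := by
      intro i
      have hne : (μ i.castSucc)⁻¹ - (μ m)⁻¹ ≠ 0 := by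
        rw [sub_ne_zero]
        intro hh
        have : μ i.castSucc = μ m := inv_inj.mp hh
        exact (Fin.castSucc_lt_last i).ne (hinj this)
      have := hcoef i
      exact (mul_eq_zero.mp this).resolve_right hne
    -- conclude for the last coordinate
    have hglast : g m = 0 := by
      rw [Fin.sum_univ_castSucc] at hg
      have h0 : ∑ i : Fin n, g i.castSucc • v i.castSucc = 0 := by
        refine Finset.sum_eq_zero fun i _ => ?_
        rw [hgc i, zero_smul]
      rw [h0, zero_add] at hg
      rcases smul_eq_zero.mp hg with h | h
      · exact h
      · exact absurd h (hv0 m)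
    intro i
    refine Fin.lastCases ?_ ?_ i
    · exact hglast
    · exact hgc

/-- If the rank of `L + t • M` drops below the rank of `L` for every `t ≠ 0`, contradiction. -/
lemma rank_drop_aux {V W : Type*} [AddCommGroup V] [Module ℝ V] [AddCommGroup W] [Module ℝ W]
    [FiniteDimensional ℝ V] (L M : V →ₗ[ℝ] W)
    (h : ∀ t : ℝ, t ≠ 0 → finrank ℝ (range (L + t • M)) < finrank ℝ (range L)) : False := by
  obtain ⟨S, hS⟩ := Submodule.exists_isCompl (ker L)
  set ρ := finrank ℝ (range L) with hρ
  have hρS : finrank ℝ S = ρ := by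
    have h1 : finrank ℝ (ker L) + finrank ℝ S = finrank ℝ V :=
      Submodule.finrank_add_eq_of_isCompl hS
    have h2 : ρ + finrank ℝ (ker L) = finrank ℝ V := L.finrank_range_add_finrank_ker
    omega
  -- the restriction of L to S is injective
  have hLS : ∀ x : S, L.domRestrict S x = 0 → x = 0 := by
    intro x hx
    have hx1 : (x : V) ∈ ker L ⊓ S := ⟨hx, x.2⟩
    rw [hS.disjoint.eq_bot] at hx1
    exact Subtype.ext hx1
  -- for each of ρ+1 distinct nonzero parameters, get a nonzero kernel vector in S
  have hvex : ∀ i : Fin (ρ + 1), ∃ x : S, x ≠ 0 ∧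
      (L + ((i : ℝ) + 1) • M).domRestrict S x = 0 := by
    intro i
    set t : ℝ := (i : ℝ) + 1 with ht
    have ht0 : t ≠ 0 := by positivity
    by_contra hcon
    push_neg at hcon
    have hker : ker ((L + t • M).domRestrict S) = ⊥ := by
      rw [Submodule.eq_bot_iff]
      intro x hx
      by_contra hx0
      exact (hcon x hx0) hx
    have hinj : Function.Injective ((L + t • M).domRestrict S) := ker_eq_bot.mp hker
    have h1 : finrank ℝ (range ((L + t • M).domRestrict S)) = finrank ℝ S := by
      have := ((L + t • M).domRestrict S).finrank_range_add_finrank_ker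
      rw [hker, finrank_bot] at this
      omega
    have h2 : range ((L + t • M).domRestrict S) ≤ range (L + t • M) :=
      range_domRestrict_le_range _ _
    have h3 : finrank ℝ (range ((L + t • M).domRestrict S))
        ≤ finrank ℝ (range (L + t • M)) := Submodule.finrank_mono h2
    have h4 := h t ht0
    omega
  choose v hv0 hveq using hvex
  -- apply the independence lemma with μ i = -((i:ℝ)+1)
  have hindep : LinearIndependent ℝ v := by
    refine indep_aux (L.domRestrict S) (M.domRestrict S) hLS (ρ + 1) v
      (fun i => -((i : ℝ) + 1)) hv0 ?_ ?_ ?_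
    · intro i j hij
      have : ((i : ℕ) : ℝ) = ((j : ℕ) : ℝ) := by
        have := hij
        simp only [neg_inj, add_left_inj] at this
        exact this
      exact Fin.ext (Nat.cast_injective this)
    · intro i
      have : (0 : ℝ) < (i : ℝ) + 1 := by positivity
      intro hh
      rw [neg_eq_zero] at hh
      linarith
    · intro i
      have h0 := hveq i
      have hexp : (L + ((i : ℝ) + 1) • M).domRestrict S (v i)
          = L.domRestrict S (v i) + ((i : ℝ) + 1) • M.domRestrict S (v i) := by
        simp [LinearMap.domRestrict_apply]
      rw [hexp] at h0
      have h1 : L.domRestrict S (v i) = -(((i : ℝ) + 1) • M.domRestrict S (v i)) :=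
        eq_neg_of_add_eq_zero_left h0
      rw [h1, neg_smul]
  have hcard : ρ + 1 ≤ finrank ℝ S := by
    have := hindep.fintype_card_le_finrank
    simpa using this
  omega

/-- If `b` realizes the maximal rank of the pencil `L + t • M`, then `M` maps the kernel
of `L` into the range of `L`. -/
lemma key_aux {V W : Type*} [AddCommGroup V] [Module ℝ V] [AddCommGroup W] [Module ℝ W]
    [FiniteDimensional ℝ V] (L M : V →ₗ[ℝ] W)
    (hmax : ∀ t : ℝ, finrank ℝ (range (L + t • M)) ≤ finrank ℝ (range L))
    (u : V) (hu : L u = 0) : M u ∈ range L := by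
  by_contra hMu
  set d := finrank ℝ V with hd
  set ρ := finrank ℝ (range L) with hρ
  set m := finrank ℝ (ker L) with hm
  have hrank : ρ + m = d := L.finrank_range_add_finrank_ker
  -- a functional vanishing on `range L` but not at `M u`
  obtain ⟨f₀, hf₀⟩ : ∃ f₀ : Module.Dual ℝ (W ⧸ range L), f₀ ((range L).mkQ (M u)) ≠ 0 := by
    by_contra hcon
    push_neg at hcon
    have := (Module.forall_dual_apply_eq_zero_iff ℝ ((range L).mkQ (M u))).mp hcon
    rw [Submodule.mkQ_apply, Submodule.Quotient.mk_eq_zero] at this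
    exact hMu this
  set g : W →ₗ[ℝ] ℝ := f₀ ∘ₗ (range L).mkQ with hg
  have hgL : ∀ w ∈ range L, g w = 0 := by
    intro w hw
    have h0 : (range L).mkQ w = 0 := by
      rw [Submodule.mkQ_apply, Submodule.Quotient.mk_eq_zero]
      exact hw
    rw [hg, comp_apply, h0, map_zero]
  set h : V →ₗ[ℝ] ℝ := g ∘ₗ M with hh
  have hhu : h u ≠ 0 := by
    rw [hh, comp_apply, hg, comp_apply]
    exact hf₀
  set Z := ker h with hZ
  have hdZ : finrank ℝ Z + 1 = d := by
    have h1 := h.finrank_range_add_finrank_ker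
    rw [← hZ] at h1
    have h2 : finrank ℝ (range h) = 1 := by
      have hle : finrank ℝ (range h) ≤ 1 := by
        simpa using (range h).finrank_le
      have hne : range h ≠ ⊥ := by
        intro hbot
        have hmem : h u ∈ range h := mem_range_self _ _
        rw [hbot, Submodule.mem_bot] at hmem
        exact hhu hmem
      have : finrank ℝ (range h) ≠ 0 := fun hc => hne (Submodule.finrank_eq_zero.mp hc)
      omega
    omega
  -- dimension of `ker L ⊓ Z`
  have hkerZ : finrank ℝ (comap (ker L).subtype Z) + 1 = m := by
    have h1 := (h.domRestrict (ker L)).finrank_range_add_finrank_ker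
    have h2 : finrank ℝ (range (h.domRestrict (ker L))) = 1 := by
      have hle : finrank ℝ (range (h.domRestrict (ker L))) ≤ 1 := by
        simpa using (range (h.domRestrict (ker L))).finrank_le
      have hne : range (h.domRestrict (ker L)) ≠ ⊥ := by
        intro hbot
        have hmem : h.domRestrict (ker L) ⟨u, hu⟩ ∈ range (h.domRestrict (ker L)) :=
          mem_range_self _ _
        rw [hbot, Submodule.mem_bot, domRestrict_apply] at hmem
        exact hhu hmem
      have : finrank ℝ (range (h.domRestrict (ker L))) ≠ 0 :=
        fun hc => hne (Submodule.finrank_eq_zero.mp hc)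
      omega
    rw [ker_domRestrict, ← hZ] at h1
    omega
  have e1 : finrank ℝ (comap Z.subtype (ker L))
      = finrank ℝ ((ker L) ⊓ Z : Submodule ℝ V) := by
    rw [show comap Z.subtype (ker L) = comap Z.subtype (ker L ⊓ Z) by
      rw [Submodule.comap_inf, Submodule.comap_subtype_self, inf_top_eq]]
    exact (Submodule.comapSubtypeEquivOfLe inf_le_right).finrank_eq
  have e2 : finrank ℝ (comap (ker L).subtype Z)
      = finrank ℝ ((ker L) ⊓ Z : Submodule ℝ V) := by
    rw [show comap (ker L).subtype Z = comap (ker L).subtype (ker L ⊓ Z) by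
      rw [Submodule.comap_inf, Submodule.comap_subtype_self, top_inf_eq]]
    exact (Submodule.comapSubtypeEquivOfLe inf_le_left).finrank_eq
  have hrankL' : finrank ℝ (range (L.domRestrict Z)) = ρ := by
    have h1 := (L.domRestrict Z).finrank_range_add_finrank_ker
    rw [ker_domRestrict, e1] at h1
    omega
  have hdrop : ∀ t : ℝ, t ≠ 0 →
      finrank ℝ (range ((L.domRestrict Z) + t • (M.domRestrict Z))) <
      finrank ℝ (range (L.domRestrict Z)) := by
    intro t ht
    have hcomp : (L.domRestrict Z) + t • (M.domRestrict Z) = (L + t • M).domRestrict Z := by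
      ext x
      simp [domRestrict_apply]
    rw [hcomp, hrankL']
    have hsub : ker (L + t • M) ≤ Z := by
      intro x hx
      have hx0 : L x + t • M x = 0 := hx
      have hgx : g (L x) + t * g (M x) = 0 := by
        have := congrArg g hx0
        simpa [map_add, map_smul, smul_eq_mul] using this
      have hgl : g (L x) = 0 := hgL _ (mem_range_self _ _)
      have ht0 : t * g (M x) = 0 := by linarith
      have hMx : g (M x) = 0 := by
        rcases mul_eq_zero.mp ht0 with h' | h'
        · exact absurd h' ht
        · exact h'
      have : h x = 0 := by rw [hh, comp_apply]; exact hMx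
      exact mem_ker.mpr this
    have h1 := ((L + t • M).domRestrict Z).finrank_range_add_finrank_ker
    rw [ker_domRestrict] at h1
    have e3 : finrank ℝ (comap Z.subtype (ker (L + t • M)))
        = finrank ℝ (ker (L + t • M)) :=
      (Submodule.comapSubtypeEquivOfLe hsub).finrank_eq
    have h2 := (L + t • M).finrank_range_add_finrank_ker
    have h3 := hmax t
    omega
  exact rank_drop_aux (L.domRestrict Z) (M.domRestrict Z) hdrop

theorem stmt_1 {A : Type*} [CommRing A] [Algebra ℝ A] (𝒜 : ℕ → Submodule ℝ A)
    [GradedRing 𝒜] (s r k : ℕ) (V : Submodule ℝ A) [FiniteDimensional ℝ V]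
    (hV : V ≤ 𝒜 s)
    (hpow : ∀ c ∈ V, c ≠ 0 → c ^ k ≠ 0)
    (b : A) (hb : b ∈ 𝒜 (s * (r - 1)))
    (hmax : ∀ b' ∈ 𝒜 (s * (r - 1)),
      Module.finrank ℝ (LinearMap.range ((LinearMap.mulRight ℝ b').comp V.subtype)) ≤
      Module.finrank ℝ (LinearMap.range ((LinearMap.mulRight ℝ b).comp V.subtype)))
    (hrk : r < k) :
    ∀ c ∈ V, c * b = 0 → c = 0 := by
  intro c hc hcb
  by_contra hcne
  rcases le_or_gt r 1 with hr | hr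
  · -- for `r ≤ 1` we have `1 ∈ 𝒜 (s*(r-1))`, so the maximal rank is `dim V` and
    -- multiplication by `b` is injective
    have h1mem : (1 : A) ∈ 𝒜 (s * (r - 1)) := by
      have h0 : s * (r - 1) = 0 := by
        have : r - 1 = 0 := by omega
        rw [this, Nat.mul_zero]
      rw [h0]
      exact SetLike.one_mem_graded 𝒜
    have hφ1 : (LinearMap.mulRight ℝ (1 : A)).comp V.subtype = V.subtype := by
      ext x
      simp
    have hle := hmax 1 h1mem
    rw [hφ1, Submodule.range_subtype] at hle
    set F := (LinearMap.mulRight ℝ b).comp V.subtype with hF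
    have hge : finrank ℝ (LinearMap.range F) ≤ finrank ℝ V := F.finrank_range_le
    have h1 := F.finrank_range_add_finrank_ker
    have hker0 : finrank ℝ (LinearMap.ker F) = 0 := by omega
    have hkerbot : LinearMap.ker F = ⊥ := Submodule.finrank_eq_zero.mp hker0
    have hmem : (⟨c, hc⟩ : V) ∈ LinearMap.ker F := by
      rw [LinearMap.mem_ker, hF]
      simp only [LinearMap.comp_apply, Submodule.subtype_apply, LinearMap.mulRight_apply]
      exact hcb
    rw [hkerbot, Submodule.mem_bot] at hmem
    exact hcne (by simpa using congrArg Subtype.val hmem)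
  · -- for `r ≥ 2`, apply `key_aux` with `M` multiplication by `c^(r-1)`
    have hcs : c ∈ 𝒜 s := hV hc
    have hcr : c ^ (r - 1) ∈ 𝒜 (s * (r - 1)) := by
      have := SetLike.pow_mem_graded (r - 1) hcs
      rwa [smul_eq_mul, Nat.mul_comm] at this
    set L := (LinearMap.mulRight ℝ b).comp V.subtype with hL
    set M := (LinearMap.mulRight ℝ (c ^ (r - 1))).comp V.subtype with hM
    have hmax' : ∀ t : ℝ, finrank ℝ (LinearMap.range (L + t • M)) ≤
        finrank ℝ (LinearMap.range L) := by
      intro t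
      have hmem : b + t • c ^ (r - 1) ∈ 𝒜 (s * (r - 1)) :=
        add_mem hb (Submodule.smul_mem _ t hcr)
      have heq : (LinearMap.mulRight ℝ (b + t • c ^ (r - 1))).comp V.subtype = L + t • M := by
        ext x
        simp [hL, hM, mul_add, mul_smul_comm]
      have := hmax _ hmem
      rwa [heq] at this
    have hu : L (⟨c, hc⟩ : V) = 0 := by
      rw [hL]
      simp only [LinearMap.comp_apply, Submodule.subtype_apply, LinearMap.mulRight_apply]
      exact hcb
    obtain ⟨x, hx⟩ := key_aux L M hmax' ⟨c, hc⟩ hu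
    have hx' : (x : A) * b = c * c ^ (r - 1) := by
      rw [hL, hM] at hx
      simpa using hx
    -- derive `c ^ k = 0`
    set p := r - 2 with hp
    set q := k - r - 1 with hq
    rw [show r - 1 = p + 1 by omega] at hx'
    have hck : c ^ k = 0 := by
      rw [show k = p + 1 + (q + 1) + 1 by omega]
      linear_combination (-(c ^ (q + 1))) * hx' + ((x : A) * c ^ q) * hcb
    exact hpow c hc hcne hck
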